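/- Let G be a P5-free graph containing a triangle on vertices v1, v2, v3. Define X1 as the set of vertices outside the triangle whose only neighbor among {v1,v2,v3} is v1, X2 analogously for v2, Y3 as the set of vertices outside the triangle adjacent to exactly v1 and v2, and L as the set of vertices with no neighbor in {v1,v2,v3}. Then the vertex set of each connected component of the subgraph induced by X1 ∪ L is a homogeneous set in the subgraph induced by X1 ∪ X2 ∪ Y3 ∪ L. -/

import Mathlib

open SimpleGraph

/-- The complete graph on 5 vertices minus one edge. -/
def K5e : SimpleGraph (Fin 5) := (⊤ : SimpleGraph (Fin 5)).deleteEdges {s(0, 1)}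

/-- `H` has an induced copy in `G`. -/
def HasInducedCopy {W V : Type*} (H : SimpleGraph W) (G : SimpleGraph V) : Prop :=
  ∃ f : W ↪ V, ∀ a b : W, G.Adj (f a) (f b) ↔ H.Adj a b

/-- `G` contains no induced subgraph isomorphic to `H`. -/
def IsInducedFree {V W : Type*} (G : SimpleGraph V) (H : SimpleGraph W) : Prop :=
  ¬ HasInducedCopy H G

lemma auxP5 {V : Type*} (G : SimpleGraph V) (x0 x1 x2 x3 x4 : V)
    (e01 : G.Adj x0 x1) (e12 : G.Adj x1 x2) (e23 : G.Adj x2 x3) (e34 : G.Adj x3 x4)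
    (n02 : ¬G.Adj x0 x2) (n03 : ¬G.Adj x0 x3) (n04 : ¬G.Adj x0 x4)
    (n13 : ¬G.Adj x1 x3) (n14 : ¬G.Adj x1 x4) (n24 : ¬G.Adj x2 x4)
    (d02 : x0 ≠ x2) (d03 : x0 ≠ x3) (d04 : x0 ≠ x4)
    (d13 : x1 ≠ x3) (d14 : x1 ≠ x4) (d24 : x2 ≠ x4) :
    HasInducedCopy (pathGraph 5) G := by
  have e01' := e01.symm; have e12' := e12.symm; have e23' := e23.symm; have e34' := e34.symm
  have n02' : ¬G.Adj x2 x0 := fun h => n02 h.symm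
  have n03' : ¬G.Adj x3 x0 := fun h => n03 h.symm
  have n04' : ¬G.Adj x4 x0 := fun h => n04 h.symm
  have n13' : ¬G.Adj x3 x1 := fun h => n13 h.symm
  have n14' : ¬G.Adj x4 x1 := fun h => n14 h.symm
  have n24' : ¬G.Adj x4 x2 := fun h => n24 h.symm
  have d01 := e01.ne; have d12 := e12.ne; have d23 := e23.ne; have d34 := e34.ne
  have d02' := d02.symm; have d03' := d03.symm; have d04' := d04.symm
  have d13' := d13.symm; have d14' := d14.symm; have d24' := d24.symm
  have d01' := d01.symm; have d12' := d12.symm; have d23' := d23.symm; have d34' := d34.symm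
  refine ⟨⟨![x0, x1, x2, x3, x4], ?_⟩, ?_⟩
  · intro i j hij
    fin_cases i <;> fin_cases j <;> simp_all
  · intro i j
    show G.Adj (![x0, x1, x2, x3, x4] i) (![x0, x1, x2, x3, x4] j) ↔ _
    fin_cases i <;> fin_cases j <;> simp_all [pathGraph_adj] <;> decide

theorem stmt_5 {V : Type*} (G : SimpleGraph V) (hG : IsInducedFree G (pathGraph 5))
    (v1 v2 v3 : V) (h12 : G.Adj v1 v2) (h13 : G.Adj v1 v3) (h23 : G.Adj v2 v3)
    (X1 X2 Y3 L : Set V)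
    (hX1 : X1 = {u | u ∉ ({v1, v2, v3} : Set V) ∧ G.Adj u v1 ∧ ¬ G.Adj u v2 ∧ ¬ G.Adj u v3})
    (hX2 : X2 = {u | u ∉ ({v1, v2, v3} : Set V) ∧ ¬ G.Adj u v1 ∧ G.Adj u v2 ∧ ¬ G.Adj u v3})
    (hY3 : Y3 = {u | u ∉ ({v1, v2, v3} : Set V) ∧ G.Adj u v1 ∧ G.Adj u v2 ∧ ¬ G.Adj u v3})
    (hL : L = {u | u ∉ ({v1, v2, v3} : Set V) ∧ ¬ G.Adj u v1 ∧ ¬ G.Adj u v2 ∧ ¬ G.Adj u v3}) :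
    ∀ c : (G.induce (X1 ∪ L)).ConnectedComponent,
      ∀ w ∈ (X1 ∪ X2 ∪ Y3 ∪ L) \ (Subtype.val '' c.supp),
        (∃ s ∈ Subtype.val '' c.supp, G.Adj w s) →
          ∀ s ∈ Subtype.val '' c.supp, G.Adj w s := by
  intro c w hw hex t ht
  by_contra hwt
  obtain ⟨hwmem, hwnot⟩ := hw
  obtain ⟨s, hs, hws⟩ := hex
  obtain ⟨s', hs', rfl⟩ := hs
  obtain ⟨t', ht', rfl⟩ := ht
  -- basic facts about members of X1 ∪ L
  have hXL : ∀ u ∈ X1 ∪ L, u ≠ v2 ∧ u ≠ v3 ∧ ¬ G.Adj u v2 ∧ ¬ G.Adj u v3 := by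
    intro u hu
    rcases hu with hu | hu
    · rw [hX1] at hu
      obtain ⟨hn, _, h2, h3⟩ := hu
      simp only [Set.mem_insert_iff, Set.mem_singleton_iff, not_or] at hn
      exact ⟨hn.2.1, hn.2.2, h2, h3⟩
    · rw [hL] at hu
      obtain ⟨hn, _, h2, h3⟩ := hu
      simp only [Set.mem_insert_iff, Set.mem_singleton_iff, not_or] at hn
      exact ⟨hn.2.1, hn.2.2, h2, h3⟩
  -- w is not in X1 ∪ L (else it would be in the component c)
  have hwXL : w ∉ X1 ∪ L := by
    intro hwXL
    apply hwnot
    refine ⟨⟨w, hwXL⟩, ?_, rfl⟩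
    rw [SimpleGraph.ConnectedComponent.mem_supp_iff] at hs' ⊢
    rw [← hs']
    apply SimpleGraph.ConnectedComponent.connectedComponentMk_eq_of_adj
    exact hws
  -- hence w ∈ X2 ∪ Y3
  have hw2 : G.Adj w v2 ∧ ¬ G.Adj w v3 ∧ w ≠ v2 ∧ w ≠ v3 := by
    rcases hwmem with ((hu | hu) | hu) | hu
    · exact absurd (Or.inl hu) hwXL
    · rw [hX2] at hu
      obtain ⟨hn, _, h2, h3⟩ := hu
      simp only [Set.mem_insert_iff, Set.mem_singleton_iff, not_or] at hn
      exact ⟨h2, h3, hn.2.1, hn.2.2⟩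
    · rw [hY3] at hu
      obtain ⟨hn, _, h2, h3⟩ := hu
      simp only [Set.mem_insert_iff, Set.mem_singleton_iff, not_or] at hn
      exact ⟨h2, h3, hn.2.1, hn.2.2⟩
    · exact absurd (Or.inr hu) hwXL
  obtain ⟨hwv2, hwv3, hwne2, hwne3⟩ := hw2
  -- find an edge a-b in X1 ∪ L with w ~ a and w ≁ b
  have hreach : (G.induce (X1 ∪ L)).Reachable s' t' := by
    rw [SimpleGraph.ConnectedComponent.mem_supp_iff] at hs' ht'
    exact SimpleGraph.ConnectedComponent.exact (hs'.trans ht'.symm)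
  obtain ⟨p⟩ := hreach
  have key : ∀ (x y : ↥(X1 ∪ L)) (_ : (G.induce (X1 ∪ L)).Walk x y),
      G.Adj w ↑x → ¬ G.Adj w ↑y →
      ∃ a b : ↥(X1 ∪ L), G.Adj ↑a ↑b ∧ G.Adj w ↑a ∧ ¬ G.Adj w ↑b := by
    intro x y p
    induction p with
    | nil => intro h1 h2; exact absurd h1 h2
    | @cons u v z h q ih =>
      intro h1 h2
      by_cases hm : G.Adj w ↑v
      · exact ih hm h2
      · exact ⟨u, v, h, h1, hm⟩
  obtain ⟨a, b, hab, hwa, hwb⟩ := key s' t' p hws hwt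
  obtain ⟨ha2, ha3, haA2, haA3⟩ := hXL ↑a a.2
  obtain ⟨hb2, hb3, hbA2, hbA3⟩ := hXL ↑b b.2
  have hbw : (b : V) ≠ w := by
    intro h; exact hwXL (h ▸ b.2)
  -- induced P5 : b - a - w - v2 - v3
  exact hG (auxP5 G ↑b ↑a w v2 v3 hab.symm hwa.symm hwv2 h23
    (fun h => hwb h.symm) hbA2 hbA3 haA2 haA3 hwv3
    hbw hb2 hb3 ha2 ha3 hwne3)
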